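/- Let μ be a proper (2m−1)-edge-coloring of the complete graph K_{2m} such that every two distinct colors induce a C4-factor. Suppose H = {x_1, …, x_{2^h}} is a set of 2^h vertices (2^h < 2m) whose induced clique uses exactly the 2^h − 1 colors c_1, …, c_{2^h−1}, let c be a color not appearing on the clique induced by H, and let y_i be the vertex joined to x_i by an edge of color c, for each i. Then H′ = {y_1, …, y_{2^h}} is disjoint from H, μ(x_i x_j) = μ(y_i y_j) for all 1 ≤ i ≠ j ≤ 2^h, and the clique induced by H ∪ H′ uses exactly 2^{h+1} − 1 colors. -/

import Mathlib

/-- `φ` is a proper edge-coloring of the complete graph on `V` (given as a function on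
unordered pairs of vertices): two edges sharing a vertex receive distinct colors. -/
def IsProperEdgeColoring {V C : Type*} (φ : Sym2 V → C) : Prop :=
  ∀ u v w : V, u ≠ v → u ≠ w → v ≠ w → φ s(u, v) ≠ φ s(u, w)

/-- The spanning subgraph of the complete graph on `V` consisting of the edges
colored `a` or `b`. -/
def colorPairGraph {V C : Type*} (φ : Sym2 V → C) (a b : C) : SimpleGraph V where
  Adj u v := u ≠ v ∧ (φ s(u, v) = a ∨ φ s(u, v) = b)
  symm := by
    refine ⟨fun u v h => ?_⟩
    exact ⟨h.1.symm, by rw [Sym2.eq_swap]; exact h.2⟩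
  loopless := ⟨fun v h => h.1 rfl⟩

/-- A graph is a `C4`-factor (of the complete graph on its vertex type) if it is
2-regular and every connected component is a 4-cycle (equivalently, for a 2-regular
graph, every connected component has exactly 4 vertices). -/
def IsC4Factor {V : Type*} (G : SimpleGraph V) : Prop :=
  (∀ v : V, (G.neighborSet v).ncard = 2) ∧
  ∀ c : G.ConnectedComponent, c.supp.ncard = 4

/-- The set of colors appearing on edges of the clique induced by the vertex set `S`. -/
def cliqueColors {V C : Type*} (φ : Sym2 V → C) (S : Set V) : Set C :=
  {c | ∃ u ∈ S, ∃ v ∈ S, u ≠ v ∧ φ s(u, v) = c}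

/- ### Auxiliary lemmas -/

lemma proper_eq {V C : Type*} {φ : Sym2 V → C} (hp : IsProperEdgeColoring φ) {u v w : V}
    (huv : u ≠ v) (huw : u ≠ w) (hcol : φ s(u, v) = φ s(u, w)) : v = w := by
  by_contra hne
  exact hp u v w huv huw hne hcol

lemma colorPairGraph_adj {V C : Type*} {φ : Sym2 V → C} {a b : C} {u v : V} :
    (colorPairGraph φ a b).Adj u v ↔ u ≠ v ∧ (φ s(u, v) = a ∨ φ s(u, v) = b) := Iff.rfl

lemma other_neighbor {V : Type*} {G : SimpleGraph V} {v w : V}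
    (h2 : (G.neighborSet v).ncard = 2) (hw : G.Adj v w) :
    ∃ u, G.Adj v u ∧ u ≠ w := by
  obtain ⟨a, b, hab, hs⟩ := Set.ncard_eq_two.mp h2
  have hwm : w ∈ G.neighborSet v := hw
  rw [hs] at hwm
  have ham : a ∈ G.neighborSet v := by rw [hs]; simp
  have hbm : b ∈ G.neighborSet v := by rw [hs]; simp
  simp only [Set.mem_insert_iff, Set.mem_singleton_iff] at hwm
  rcases hwm with rfl | rfl
  · exact ⟨b, hbm, hab.symm⟩
  · exact ⟨a, ham, hab⟩

lemma supp_four {V : Type*} [Finite V] {G : SimpleGraph V}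
    (h4 : ∀ c : G.ConnectedComponent, c.supp.ncard = 4)
    {p q r s : V} (hpq : p ≠ q) (hpr : p ≠ r) (hps : p ≠ s) (hqr : q ≠ r)
    (hqs : q ≠ s) (hrs : r ≠ s)
    (apq : G.Adj p q) (aqr : G.Adj q r) (ars : G.Adj r s) :
    (G.connectedComponentMk p).supp = {p, q, r, s} := by
  have hcard : ({p, q, r, s} : Set V).ncard = 4 := by
    rw [Set.ncard_insert_of_notMem (by simp [hpq, hpr, hps]),
      Set.ncard_insert_of_notMem (by simp [hqr, hqs]),
      Set.ncard_insert_of_notMem (by simp [hrs]), Set.ncard_singleton]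
  symm
  apply Set.eq_of_subset_of_ncard_le
  · intro v hv
    simp only [Set.mem_insert_iff, Set.mem_singleton_iff] at hv
    rw [SimpleGraph.ConnectedComponent.mem_supp_iff]
    rcases hv with rfl | rfl | rfl | rfl
    · rfl
    · exact SimpleGraph.ConnectedComponent.sound apq.symm.reachable
    · exact SimpleGraph.ConnectedComponent.sound
        (aqr.symm.reachable.trans apq.symm.reachable)
    · exact SimpleGraph.ConnectedComponent.sound
        (ars.symm.reachable.trans (aqr.symm.reachable.trans apq.symm.reachable))
  · rw [h4, hcard]
  · exact Set.toFinite _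

/-- The inductive step in the proof of Lemma 2(b): given a clique `H = {x₁, …, x_{2^h}}`
using exactly `2^h - 1` colors, a color `c` not appearing on `H`, and `yᵢ` the vertex
joined to `xᵢ` by an edge of color `c`, the set `H' = {y₁, …, y_{2^h}}` is disjoint from
`H`, corresponding edges of `H` and `H'` receive the same color, and the clique induced
by `H ∪ H'` uses exactly `2^{h+1} - 1` colors. -/
theorem clique_doubling (m h : ℕ)
    (μ : Sym2 (Fin (2 * m)) → Fin (2 * m - 1))
    (hproper : IsProperEdgeColoring μ)
    (hC4 : ∀ a b : Fin (2 * m - 1), a ≠ b → IsC4Factor (colorPairGraph μ a b))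
    (hsize : 2 ^ h < 2 * m)
    (x : Fin (2 ^ h) → Fin (2 * m)) (hxinj : Function.Injective x)
    (hHcolors : (cliqueColors μ (Set.range x)).ncard = 2 ^ h - 1)
    (c : Fin (2 * m - 1)) (hc : c ∉ cliqueColors μ (Set.range x))
    (y : Fin (2 ^ h) → Fin (2 * m))
    (hy : ∀ i, y i ≠ x i ∧ μ s(x i, y i) = c) :
    (∀ i j, y i ≠ x j) ∧
    Function.Injective y ∧
    (∀ i j, i ≠ j → μ s(x i, x j) = μ s(y i, y j)) ∧
    (cliqueColors μ (Set.range x ∪ Set.range y)).ncard = 2 ^ (h + 1) - 1 := by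
  haveI : NeZero (2 ^ h) := ⟨pow_ne_zero h two_ne_zero⟩
  have hxne : ∀ {i j : Fin (2 ^ h)}, i ≠ j → x i ≠ x j :=
    fun hij e => hij (hxinj e)
  -- (1) H' disjoint from H
  have hyx : ∀ i j, y i ≠ x j := by
    intro i j
    by_cases hij : i = j
    · subst hij; exact (hy i).1
    · intro e
      exact hc ⟨x i, ⟨i, rfl⟩, x j, ⟨j, rfl⟩, hxne hij, by rw [← e]; exact (hy i).2⟩
  -- (2) y injective
  have hyinj : Function.Injective y := by
    intro i j e
    by_contra hij
    have h1 : μ s(y i, x i) = c := by rw [Sym2.eq_swap]; exact (hy i).2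
    have h2 : μ s(y i, x j) = c := by rw [Sym2.eq_swap, e]; exact (hy j).2
    exact hij (hxinj (proper_eq hproper (hyx i i) (hyx i j) (h1.trans h2.symm)))
  have hyne : ∀ {i j : Fin (2 ^ h)}, i ≠ j → y i ≠ y j :=
    fun hij e => hij (hyinj e)
  have hcne : ∀ i j, i ≠ j → μ s(x i, x j) ≠ c := by
    intro i j hij e
    exact hc ⟨x i, ⟨i, rfl⟩, x j, ⟨j, rfl⟩, hxne hij, e⟩
  -- (3) corresponding edges get the same color
  have part3 : ∀ i j, i ≠ j → μ s(x i, x j) = μ s(y i, y j) := by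
    intro i j hij
    set a := μ s(x i, x j) with ha
    obtain ⟨hreg, hsupp⟩ := hC4 a c (hcne i j hij)
    set G := colorPairGraph μ a c with hG
    have aij : G.Adj (x i) (x j) := ⟨hxne hij, Or.inl rfl⟩
    have axy : ∀ k, G.Adj (x k) (y k) := fun k => ⟨(hy k).1.symm, Or.inr (hy k).2⟩
    have hS : (G.connectedComponentMk (y i)).supp = {y i, x i, x j, y j} :=
      supp_four hsupp (hyx i i) (hyx i j) (hyne hij) (hxne hij)
        (hyx j i).symm (hyx j j).symm (axy i).symm aij (axy j)
    obtain ⟨w, hvw, hwxi⟩ := other_neighbor (hreg (y i)) (axy i).symm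
    have hwS : w ∈ ({y i, x i, x j, y j} : Set (Fin (2 * m))) := by
      rw [← hS, SimpleGraph.ConnectedComponent.mem_supp_iff]
      exact SimpleGraph.ConnectedComponent.sound hvw.symm.reachable
    have hwyi : w ≠ y i := fun e => G.loopless.irrefl _ (e ▸ hvw)
    have hwxj : w ≠ x j := by
      rintro rfl
      rcases hvw.2 with hcol | hcol
      · refine hproper (x j) (x i) (y i) (hxne hij).symm (hyx i j).symm
          (hy i).1.symm ?_
        have e1 : μ s(x j, x i) = a := by rw [Sym2.eq_swap]
        have e2 : μ s(x j, y i) = a := by rw [Sym2.eq_swap]; exact hcol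
        exact e1.trans e2.symm
      · refine hproper (x j) (y j) (y i) (hyx j j).symm (hyx i j).symm
          (hyne (Ne.symm hij)) ?_
        have e2 : μ s(x j, y i) = c := by rw [Sym2.eq_swap]; exact hcol
        exact (hy j).2.trans e2.symm
    have hwyj : w = y j := by
      simp only [Set.mem_insert_iff, Set.mem_singleton_iff] at hwS
      rcases hwS with e | e | e | e
      · exact absurd e hwyi
      · exact absurd e hwxi
      · exact absurd e hwxj
      · exact e
    subst hwyj
    rcases hvw.2 with hcol | hcol
    · exact hcol.symm
    · exfalso
      refine hproper (y i) (x i) (y j) (hyx i i) (hyne hij) (hyx j i).symm ?_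
      have e1 : μ s(y i, x i) = c := by rw [Sym2.eq_swap]; exact (hy i).2
      exact e1.trans hcol.symm
  -- the colors at a fixed vertex of H within H are exactly the clique colors of H
  have hcompl : ∀ j : Fin (2 ^ h), ({k : Fin (2 ^ h) | k ≠ j}).ncard = 2 ^ h - 1 := by
    intro j
    have : {k : Fin (2 ^ h) | k ≠ j} = {j}ᶜ := by ext k; simp
    rw [this, Set.ncard_eq_toFinset_card']
    simp [Finset.card_compl]
  have colorsAt : ∀ j : Fin (2 ^ h),
      (fun k => μ s(x j, x k)) '' {k | k ≠ j} = cliqueColors μ (Set.range x) := by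
    intro j
    apply Set.eq_of_subset_of_ncard_le
    · rintro e ⟨k, hk, rfl⟩
      exact ⟨x j, ⟨j, rfl⟩, x k, ⟨k, rfl⟩, hxne (Ne.symm hk), rfl⟩
    · rw [hHcolors, Set.ncard_image_of_injOn, hcompl j]
      intro k hk k' hk' e
      exact hxinj (proper_eq hproper (hxne (Ne.symm hk)) (hxne (Ne.symm hk')) e)
    · exact Set.toFinite _
  -- every "cross" color appears at x 0
  have cross : ∀ i j, i ≠ j →
      ∃ l, l ≠ (0 : Fin (2 ^ h)) ∧ μ s(x 0, y l) = μ s(x i, y j) := by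
    intro i j hij
    by_cases hi0 : i = 0
    · subst hi0; exact ⟨j, Ne.symm hij, rfl⟩
    set b := μ s(x i, y j) with hb
    have hbc : b ≠ c := by
      intro e
      rw [hb] at e
      exact hij (hyinj (proper_eq hproper (hyx j i).symm (hy i).1.symm
        (e.trans (hy i).2.symm))).symm
    set a := μ s(x 0, x i) with haa
    have hab : a ≠ b := by
      intro e
      have e1 : μ s(x i, x 0) = μ s(x i, y j) := by rw [Sym2.eq_swap]; exact e
      exact (hyx j 0).symm (proper_eq hproper (hxne hi0) (hyx j i).symm e1)
    have haC : a ∈ cliqueColors μ (Set.range x) :=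
      ⟨x 0, ⟨0, rfl⟩, x i, ⟨i, rfl⟩, hxne (Ne.symm hi0), rfl⟩
    rw [← colorsAt j] at haC
    obtain ⟨k, hkj, hk⟩ := haC
    have hkj : k ≠ j := hkj
    have hk : μ s(x j, x k) = a := hk
    have hk0 : k ≠ 0 := by
      by_cases hj0 : j = 0
      · subst hj0; exact hkj
      · rintro rfl
        have e1 : μ s(x 0, x j) = μ s(x 0, x i) := by rw [Sym2.eq_swap]; exact hk
        have h0j : (0 : Fin (2 ^ h)) ≠ j := fun e => hj0 e.symm
        have h0i : (0 : Fin (2 ^ h)) ≠ i := fun e => hi0 e.symm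
        exact hij (hxinj (proper_eq hproper (hxne h0j) (hxne h0i) e1)).symm
    obtain ⟨hreg, hsupp⟩ := hC4 a b hab
    set G := colorPairGraph μ a b with hG
    have a1 : G.Adj (x 0) (x i) := ⟨hxne (Ne.symm hi0), Or.inl rfl⟩
    have a2 : G.Adj (x i) (y j) := ⟨(hyx j i).symm, Or.inr rfl⟩
    have a3 : G.Adj (y j) (y k) :=
      ⟨hyne (Ne.symm hkj), Or.inl ((part3 j k (Ne.symm hkj)).symm.trans hk)⟩
    have hS : (G.connectedComponentMk (x 0)).supp = {x 0, x i, y j, y k} :=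
      supp_four hsupp (hxne (Ne.symm hi0)) (hyx j 0).symm (hyx k 0).symm
        (hyx j i).symm (hyx k i).symm (hyne (Ne.symm hkj)) a1 a2 a3
    obtain ⟨w, hvw, hwxi⟩ := other_neighbor (hreg (x 0)) a1
    have hwS : w ∈ ({x 0, x i, y j, y k} : Set (Fin (2 * m))) := by
      rw [← hS, SimpleGraph.ConnectedComponent.mem_supp_iff]
      exact SimpleGraph.ConnectedComponent.sound hvw.symm.reachable
    have hwx0 : w ≠ x 0 := fun e => G.loopless.irrefl _ (e ▸ hvw)
    have hwb : μ s(x 0, w) = b := by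
      rcases hvw.2 with e | e
      · exact absurd (proper_eq hproper (hxne (Ne.symm hi0)) hvw.1 e.symm).symm hwxi
      · exact e
    simp only [Set.mem_insert_iff, Set.mem_singleton_iff] at hwS
    rcases hwS with e | e | e | e
    · exact absurd e hwx0
    · exact absurd e hwxi
    · subst e
      refine ⟨j, ?_, hwb⟩
      rintro rfl
      exact hbc (hwb.symm.trans (hy 0).2)
    · subst e
      exact ⟨k, hk0, hwb⟩
  -- main: every clique color of H ∪ H' appears at x 0
  set S := Set.range x ∪ Set.range y with hSdef
  have hx0S : x 0 ∈ S := Or.inl ⟨0, rfl⟩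
  have mainxx : ∀ i j : Fin (2 ^ h), i ≠ j →
      ∃ w ∈ S \ {x 0}, μ s(x 0, w) = μ s(x i, x j) := by
    intro i j hij
    have hmem : μ s(x i, x j) ∈ cliqueColors μ (Set.range x) :=
      ⟨x i, ⟨i, rfl⟩, x j, ⟨j, rfl⟩, hxne hij, rfl⟩
    rw [← colorsAt 0] at hmem
    obtain ⟨k, hk0, hk⟩ := hmem
    exact ⟨x k, ⟨Or.inl ⟨k, rfl⟩, hxne hk0⟩, hk⟩
  have mainxy : ∀ i j : Fin (2 ^ h),
      ∃ w ∈ S \ {x 0}, μ s(x 0, w) = μ s(x i, y j) := by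
    intro i j
    by_cases hij : i = j
    · subst hij
      exact ⟨y 0, ⟨Or.inr ⟨0, rfl⟩, hyx 0 0⟩, (hy 0).2.trans (hy i).2.symm⟩
    · obtain ⟨l, hl0, hl⟩ := cross i j hij
      exact ⟨y l, ⟨Or.inr ⟨l, rfl⟩, hyx l 0⟩, hl⟩
  have main : ∀ u ∈ S, ∀ v ∈ S, u ≠ v →
      ∃ w ∈ S \ {x 0}, μ s(x 0, w) = μ s(u, v) := by
    rintro u hu v hv huv
    rcases hu with ⟨i, rfl⟩ | ⟨i, rfl⟩ <;> rcases hv with ⟨j, rfl⟩ | ⟨j, rfl⟩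
    · exact mainxx i j (fun e => huv (congrArg x e))
    · exact mainxy i j
    · obtain ⟨w, hw, he⟩ := mainxy j i
      exact ⟨w, hw, by rw [Sym2.eq_swap (a := y i)] at *; exact he⟩
    · have hij : i ≠ j := fun e => huv (congrArg y e)
      obtain ⟨w, hw, he⟩ := mainxx i j hij
      exact ⟨w, hw, he.trans (part3 i j hij)⟩
  have key : cliqueColors μ S = (fun v => μ s(x 0, v)) '' (S \ {x 0}) := by
    ext e
    constructor
    · rintro ⟨u, hu, v, hv, huv, rfl⟩
      obtain ⟨w, hw, hwe⟩ := main u hu v hv huv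
      exact ⟨w, hw, hwe⟩
    · rintro ⟨v, ⟨hvS, hvne⟩, rfl⟩
      exact ⟨x 0, hx0S, v, hvS, fun e2 => hvne (by simp [← e2]), rfl⟩
  -- counting
  have hrx : (Set.range x).ncard = 2 ^ h := by
    rw [← Set.image_univ, Set.ncard_image_of_injective _ hxinj, Set.ncard_univ]
    simp
  have hry : (Set.range y).ncard = 2 ^ h := by
    rw [← Set.image_univ, Set.ncard_image_of_injective _ hyinj, Set.ncard_univ]
    simp
  have hdisj : Disjoint (Set.range x) (Set.range y) := by
    rw [Set.disjoint_right]
    rintro a ⟨i, rfl⟩ ⟨j, e⟩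
    exact hyx i j e.symm
  have hScard : S.ncard = 2 ^ h + 2 ^ h := by
    rw [hSdef, Set.ncard_union_eq hdisj (Set.toFinite _) (Set.toFinite _), hrx, hry]
  refine ⟨hyx, hyinj, part3, ?_⟩
  have hinj : Set.InjOn (fun v => μ s(x 0, v)) (S \ {x 0}) := by
    rintro v ⟨_, hv⟩ v' ⟨_, hv'⟩ e
    exact proper_eq hproper (fun e2 => hv (by simp [← e2]))
      (fun e2 => hv' (by simp [← e2])) e
  rw [key, Set.ncard_image_of_injOn hinj,
    Set.ncard_diff_singleton_of_mem hx0S, hScard]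
  have : 2 ^ (h + 1) = 2 ^ h * 2 := pow_succ 2 h
  omega
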